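/- Fix a positive integer m and σ ∈ {−1,1}, and let q be nonzero and not a root of unity. On an m-dimensional complex vector space with basis v₀,…,v_{m−1}, the operators defined by s₁₂ v_k = σ q^{m−2k} v_k, s₂₂ v_k = v_{k+1} (with v_m = 0), and s₁₁ v_k = q³ (1 − q^{2m−2k})(1 − q^{−2k}) v_{k−1} (with v_{−1} = 0) satisfy the defining relations of U'_q(sp₂): s₁₁ s₂₂ = q^{-2} s₂₂ s₁₁ − (q−q^{-1})(s₁₂² − q²), s₁₂ s₁₁ = q² s₁₁ s₁₂, s₁₂ s₂₂ = q^{-2} s₂₂ s₁₂, and s₁₂ is invertible. Moreover this representation is irreducible. -/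

import Mathlib

noncomputable section

/-- The operator `s₁₂` on the `m`-dimensional space with basis `v₀,…,v_{m−1}`:
`s₁₂ v_k = σ q^{m−2k} v_k`. -/
def M12 (q σ : ℂ) (m : ℕ) : Matrix (Fin m) (Fin m) ℂ :=
  Matrix.diagonal fun k => σ * q ^ ((m : ℤ) - 2 * (k : ℤ))

/-- The operator `s₂₂`: `s₂₂ v_k = v_{k+1}` (with `v_m = 0`). -/
def M22 (m : ℕ) : Matrix (Fin m) (Fin m) ℂ :=
  Matrix.of fun i j => if (i : ℕ) = (j : ℕ) + 1 then 1 else 0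

/-- The operator `s₁₁`:
`s₁₁ v_k = q³ (1 − q^{2m−2k})(1 − q^{−2k}) v_{k−1}` (with `v_{−1} = 0`). -/
def M11 (q : ℂ) (m : ℕ) : Matrix (Fin m) (Fin m) ℂ :=
  Matrix.of fun i j =>
    if (i : ℕ) + 1 = (j : ℕ) then
      q ^ 3 * (1 - q ^ (2 * (m : ℤ) - 2 * (j : ℤ))) * (1 - q ^ (-(2 * (j : ℤ))))
    else 0

/-- The coefficient `q³ (1 − q^{2m−2j})(1 − q^{−2j})`, as a function of `j : ℕ`. -/
def aco (q : ℂ) (m : ℕ) (j : ℕ) : ℂ :=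
  q ^ 3 * (1 - q ^ (2 * (m : ℤ) - 2 * (j : ℤ))) * (1 - q ^ (-(2 * (j : ℤ))))

lemma prod1 (q : ℂ) (m : ℕ) :
    M11 q m * M22 m = Matrix.diagonal (fun k : Fin m => aco q m ((k : ℕ) + 1)) := by
  ext i j
  rw [Matrix.mul_apply]
  have : ∀ k : Fin m, M11 q m i k * M22 m k j
      = if (k : ℕ) = (j : ℕ) + 1 then (if (i:ℕ) + 1 = (k:ℕ) then aco q m (k:ℕ) else 0) else 0 := by
    intro k
    by_cases h1 : (i:ℕ)+1 = (k:ℕ) <;> by_cases h2 : (k:ℕ) = (j:ℕ)+1 <;>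
      simp [M11, M22, aco, h1, h2]
  simp_rw [this]
  rw [Fin.sum_univ_eq_sum_range
    (fun k => if k = (j:ℕ)+1 then (if (i:ℕ)+1 = k then aco q m k else 0) else 0) m]
  rw [Finset.sum_ite_eq' (Finset.range m) ((j:ℕ)+1)
    (fun k => if (i:ℕ)+1 = k then aco q m k else 0)]
  rw [Matrix.diagonal_apply]
  by_cases h : (j : ℕ) + 1 < m
  · simp only [Finset.mem_range, h, if_true]
    by_cases hij : i = j
    · subst hij; simp
    · have : ¬ ((i:ℕ) + 1 = (j:ℕ) + 1) := by
        simp [Fin.ext_iff] at hij ⊢; omega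
      simp [this, hij]; intro h'; exact absurd (Fin.ext h') hij
  · have hj : (j : ℕ) + 1 = m := by omega
    have : aco q m ((j:ℕ)+1) = 0 := by
      simp [aco, hj]
    rw [if_neg (by simpa using h)]
    by_cases hij : i = j
    · subst hij; rw [if_pos rfl, this]
    · rw [if_neg hij]

lemma prod2 (q : ℂ) (m : ℕ) :
    M22 m * M11 q m = Matrix.diagonal (fun k : Fin m => aco q m (k : ℕ)) := by
  ext i j
  rw [Matrix.mul_apply]
  have : ∀ k : Fin m, M22 m i k * M11 q m k j
      = if (i:ℕ) = (k : ℕ) + 1 then (if (k:ℕ) + 1 = (j:ℕ) then aco q m (j:ℕ) else 0) else 0 := by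
    intro k
    by_cases h1 : (i:ℕ) = (k:ℕ)+1 <;> by_cases h2 : (k:ℕ)+1 = (j:ℕ) <;>
      simp [M11, M22, aco, h1, h2]
  simp_rw [this]
  rw [Matrix.diagonal_apply]
  rcases Nat.eq_zero_or_pos (i : ℕ) with hi | hi
  · have hz : ∀ k : Fin m, (if (i:ℕ) = (k:ℕ)+1 then (if (k:ℕ)+1 = (j:ℕ) then aco q m (j:ℕ) else 0) else 0) = 0 := by
      intro k; rw [if_neg]; omega
    simp_rw [hz, Finset.sum_const_zero]
    by_cases hij : i = j
    · subst hij
      have : aco q m (i:ℕ) = 0 := by simp [aco, hi]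
      simp [this]
    · simp [hij]
  · obtain ⟨i', hi'⟩ : ∃ i', (i:ℕ) = i' + 1 := ⟨(i:ℕ) - 1, by omega⟩
    have hcond : ∀ k : Fin m, ((i:ℕ) = (k:ℕ)+1) = ((k:ℕ) = i') := by
      intro k; simp [hi']; omega
    simp_rw [hcond]
    rw [Fin.sum_univ_eq_sum_range
      (fun k => if k = i' then (if k + 1 = (j:ℕ) then aco q m (j:ℕ) else 0) else 0) m]
    rw [Finset.sum_ite_eq' (Finset.range m) i'
      (fun k => if k + 1 = (j:ℕ) then aco q m (j:ℕ) else 0)]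
    have him : i' ∈ Finset.range m := by
      have := i.isLt; simp [Finset.mem_range]; omega
    rw [if_pos him]
    by_cases hij : i = j
    · subst hij; simp [← hi']
    · have : ¬ (i' + 1 = (j:ℕ)) := by
        simp [Fin.ext_iff] at hij; omega
      simp [this, hij]

lemma key1 (q σ : ℂ) (hq : q ≠ 0) (hσ2 : σ^2 = 1) (M K : ℤ) :
    q^3 * (1 - q^(2*M - 2*(K+1))) * (1 - q^(-(2*(K+1))))
    = (q^2)⁻¹ * (q^3 * (1 - q^(2*M - 2*K)) * (1 - q^(-(2*K))))
      - (q - q⁻¹) * ((σ * q^(M - 2*K))^2 - q^2) := by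
  have h2 : (q:ℂ)^(-2:ℤ) = (q^2)⁻¹ := by
    rw [show ((-2:ℤ)) = -((2:ℕ):ℤ) by norm_num, zpow_neg, zpow_natCast]
  have hA : q^(2*M - 2*(K+1)) = q^(2*M-2*K) * (q^2)⁻¹ := by
    rw [show 2*M - 2*(K+1) = (2*M-2*K) + (-2) by ring, zpow_add₀ hq, h2]
  have hB : q^(-(2*(K+1))) = q^(-(2*K)) * (q^2)⁻¹ := by
    rw [show -(2*(K+1)) = (-(2*K)) + (-2) by ring, zpow_add₀ hq, h2]
  have hC : (q^(M-2*K))^2 = q^(2*M-2*K) * q^(-(2*K)) := by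
    rw [← zpow_natCast (q^(M-2*K)) 2, ← zpow_mul,
      show (M-2*K) * ((2:ℕ):ℤ) = (2*M-2*K) + (-(2*K)) by push_cast; ring, zpow_add₀ hq]
  rw [hA, hB, mul_pow, hC, hσ2]
  generalize q^(2*M-2*K) = A
  generalize q^(-(2*K)) = B
  have hq2 : (q:ℂ)^2 ≠ 0 := pow_ne_zero _ hq
  field_simp
  ring

lemma keyd (q : ℂ) (hq : q ≠ 0) (M K : ℤ) :
    q^(M-2*K) = q^2 * q^(M-2*(K+1)) := by
  rw [show M-2*K = ((2:ℕ):ℤ) + (M - 2*(K+1)) by push_cast; ring, zpow_add₀ hq, zpow_natCast]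

lemma zroot (q : ℂ) (hq : q ≠ 0) (hroot : ∀ k : ℕ, 0 < k → q ^ k ≠ 1)
    (n : ℤ) (hn : n ≠ 0) : q ^ n ≠ 1 := by
  intro he
  rcases lt_or_gt_of_ne hn with h | h
  · have h1 : q ^ ((-n).toNat) = 1 := by
      rw [← zpow_natCast, Int.toNat_of_nonneg (by omega), zpow_neg, he, inv_one]
    exact hroot (-n).toNat (by omega) h1
  · have h1 : q ^ (n.toNat) = 1 := by
      rw [← zpow_natCast, Int.toNat_of_nonneg (by omega)]; exact he
    exact hroot n.toNat (by omega) h1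

open Finset in
lemma single_mem_aux (m : ℕ) (d : Fin m → ℂ) (hd : Function.Injective d)
    (W : Submodule ℂ (Fin m → ℂ)) (hW : ∀ v ∈ W, (Matrix.diagonal d).mulVec v ∈ W) :
    ∀ N : ℕ, ∀ w : Fin m → ℂ, w ∈ W → (univ.filter fun i => w i ≠ 0).card ≤ N →
      ∀ k, w k ≠ 0 → Pi.single k (1:ℂ) ∈ W := by
  intro N
  induction N with
  | zero =>
    intro w hw hc k hk
    exfalso
    have : k ∈ univ.filter fun i => w i ≠ 0 := by simp [hk]
    have := Finset.card_pos.mpr ⟨k, this⟩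
    omega
  | succ N ih =>
    intro w hw hc k hk
    by_cases hall : ∀ j, w j ≠ 0 → j = k
    · have hs : Pi.single k (1:ℂ) = (w k)⁻¹ • w := by
        funext j
        by_cases hj : j = k
        · subst hj; simp [Pi.single_apply, inv_mul_cancel₀ hk]
        · have hwj : w j = 0 := by
            by_contra hc'; exact hj (hall j hc')
          simp [Pi.single_apply, hj, hwj]
      rw [hs]; exact W.smul_mem _ hw
    · push_neg at hall
      obtain ⟨j, hj, hjk⟩ := hall
      set w' : Fin m → ℂ := (Matrix.diagonal d).mulVec w - d j • w with hw'def
      have hw'W : w' ∈ W := W.sub_mem (hW w hw) (W.smul_mem _ hw)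
      have hw'e : ∀ i, w' i = (d i - d j) * w i := by
        intro i
        simp [hw'def, Matrix.mulVec_diagonal, sub_mul]
      have hk' : w' k ≠ 0 := by
        rw [hw'e]
        exact mul_ne_zero (sub_ne_zero.mpr fun h => hjk (hd h).symm) hk
      refine ih w' hw'W ?_ k hk'
      have hsub : (univ.filter fun i => w' i ≠ 0) ⊆ (univ.filter fun i => w i ≠ 0).erase j := by
        intro i hi
        simp only [mem_filter, mem_univ, true_and, mem_erase] at hi ⊢
        constructor
        · rintro rfl; exact hi (by rw [hw'e]; ring)
        · intro hwi; exact hi (by rw [hw'e, hwi, mul_zero])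
      have hjmem : j ∈ univ.filter fun i => w i ≠ 0 := by simp [hj]
      have := Finset.card_le_card hsub
      rw [Finset.card_erase_of_mem hjmem] at this
      have := Finset.card_pos.mpr ⟨j, hjmem⟩
      omega

lemma mulVec_single_col (m : ℕ) (A : Matrix (Fin m) (Fin m) ℂ) (p : Fin m) :
    A.mulVec (Pi.single p 1) = fun i => A i p := by
  funext i
  simp [Matrix.mulVec, dotProduct, Pi.single_apply, mul_ite,
    Finset.sum_ite_eq' Finset.univ p]

/-- The explicit operators `s₁₂ v_k = σ q^{m−2k} v_k`, `s₂₂ v_k = v_{k+1}`,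
`s₁₁ v_k = q³ (1 − q^{2m−2k})(1 − q^{−2k}) v_{k−1}` on an `m`-dimensional space
satisfy the defining relations of `U'_q(sp₂)` (`s₁₂` being invertible), and the
resulting representation is irreducible. -/
theorem sp2_explicit_rep (q : ℂ) (hq : q ≠ 0) (hroot : ∀ k : ℕ, 0 < k → q ^ k ≠ 1)
    (σ : ℂ) (hσ : σ = 1 ∨ σ = -1) (m : ℕ) (hm : 0 < m) :
    M11 q m * M22 m
        = (q ^ 2)⁻¹ • (M22 m * M11 q m)
          - (q - q⁻¹) • ((M12 q σ m) ^ 2 - (q ^ 2 : ℂ) • (1 : Matrix (Fin m) (Fin m) ℂ)) ∧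
    M12 q σ m * M11 q m = (q ^ 2) • (M11 q m * M12 q σ m) ∧
    M12 q σ m * M22 m = (q ^ 2)⁻¹ • (M22 m * M12 q σ m) ∧
    IsUnit (M12 q σ m) ∧
    ∀ W : Submodule ℂ (Fin m → ℂ),
      (∀ v ∈ W, (M11 q m).mulVec v ∈ W) →
      (∀ v ∈ W, (M22 m).mulVec v ∈ W) →
      (∀ v ∈ W, (M12 q σ m).mulVec v ∈ W) →
      W = ⊥ ∨ W = ⊤ := by
  have hσ2 : σ ^ 2 = 1 := by rcases hσ with rfl | rfl <;> norm_num
  have hσ0 : σ ≠ 0 := by rcases hσ with rfl | rfl <;> norm_num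
  have hsq : (M12 q σ m) ^ 2
      = Matrix.diagonal (fun k : Fin m => (σ * q ^ ((m:ℤ) - 2*(k:ℤ)))^2) := by
    rw [pow_two]
    simp only [M12]
    rw [Matrix.diagonal_mul_diagonal]
    congr 1
    funext k
    simp [pow_two]
  refine ⟨?_, ?_, ?_, ?_, ?_⟩
  · -- relation 1
    rw [prod1, prod2, hsq]
    ext i j
    simp only [Matrix.sub_apply, Matrix.smul_apply, Matrix.diagonal_apply, Matrix.one_apply,
      smul_eq_mul]
    by_cases h : i = j
    · subst h
      simp only [if_pos rfl, aco]
      push_cast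
      simp only [mul_one]
      exact key1 q σ hq hσ2 (m:ℤ) (i:ℤ)
    · simp [h]
  · -- relation 2
    ext i j
    simp only [M12, M11, Matrix.diagonal_mul, Matrix.mul_diagonal, Matrix.smul_apply,
      smul_eq_mul, Matrix.of_apply]
    by_cases h : (i:ℕ) + 1 = (j:ℕ)
    · rw [if_pos h, show (j:ℤ) = (i:ℤ)+1 from by exact_mod_cast h.symm,
        keyd q hq (m:ℤ) (i:ℤ)]
      ring
    · rw [if_neg h]; ring
  · -- relation 3
    ext i j
    simp only [M12, M22, Matrix.diagonal_mul, Matrix.mul_diagonal, Matrix.smul_apply,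
      smul_eq_mul, Matrix.of_apply]
    by_cases h : (i:ℕ) = (j:ℕ) + 1
    · rw [if_pos h, show (i:ℤ) = (j:ℤ)+1 from by exact_mod_cast h,
        keyd q hq (m:ℤ) (j:ℤ)]
      field_simp
    · rw [if_neg h]; ring
  · -- invertibility
    rw [Matrix.isUnit_iff_isUnit_det]
    simp only [M12, Matrix.det_diagonal]
    rw [isUnit_iff_ne_zero]
    rw [Finset.prod_ne_zero_iff]
    intro k _
    exact mul_ne_zero hσ0 (zpow_ne_zero _ hq)
  · -- irreducibility
    intro W h11 h22 h12
    by_cases hbot : W = ⊥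
    · exact Or.inl hbot
    right
    obtain ⟨w, hw, hw0⟩ := Submodule.exists_mem_ne_zero_of_ne_bot hbot
    obtain ⟨k, hk⟩ : ∃ k, w k ≠ 0 := by
      by_contra hc
      push_neg at hc
      exact hw0 (funext hc)
    -- d is injective
    set d : Fin m → ℂ := fun k => σ * q ^ ((m : ℤ) - 2 * (k : ℤ)) with hd_def
    have hd : Function.Injective d := by
      intro a b hab
      simp only [hd_def] at hab
      have hq1 : q ^ ((m:ℤ) - 2*(a:ℤ)) = q ^ ((m:ℤ) - 2*(b:ℤ)) :=
        mul_left_cancel₀ hσ0 hab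
      by_contra hne
      have hvne : (a:ℤ) ≠ (b:ℤ) := by
        simp [Fin.ext_iff] at hne ⊢
        exact_mod_cast hne
      have : q ^ (2*(b:ℤ) - 2*(a:ℤ)) = 1 := by
        rw [show 2*(b:ℤ) - 2*(a:ℤ) = ((m:ℤ) - 2*(a:ℤ)) - ((m:ℤ) - 2*(b:ℤ)) by ring,
          zpow_sub₀ hq, hq1, div_self (zpow_ne_zero _ hq)]
      exact zroot q hq hroot _ (by omega) this
    have hsingle : ∀ k : Fin m, w k ≠ 0 → Pi.single k (1:ℂ) ∈ W := by
      intro k hk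
      exact single_mem_aux m d hd W h12 _ w hw le_rfl k hk
    have hbase := hsingle k hk
    -- nonvanishing of aco for 1 ≤ p < m
    have haco : ∀ p : ℕ, 0 < p → p < m → aco q m p ≠ 0 := by
      intro p hp0 hpm
      simp only [aco]
      refine mul_ne_zero (mul_ne_zero (pow_ne_zero _ hq) ?_) ?_
      · rw [sub_ne_zero]
        intro hcon
        exact zroot q hq hroot (2*(m:ℤ) - 2*(p:ℤ)) (by omega) hcon.symm
      · rw [sub_ne_zero]
        intro hcon
        exact zroot q hq hroot (-(2*(p:ℤ))) (by omega) hcon.symm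
    -- going up
    have hup : ∀ n : ℕ, ∀ h : (k:ℕ) + n < m, Pi.single (⟨(k:ℕ)+n, h⟩ : Fin m) (1:ℂ) ∈ W := by
      intro n
      induction n with
      | zero =>
        intro h
        have : (⟨(k:ℕ)+0, h⟩ : Fin m) = k := by ext; simp
        rw [this]; exact hbase
      | succ n ihn =>
        intro h
        have h' : (k:ℕ) + n < m := by omega
        have hprev := ihn h'
        have hmem := h22 _ hprev
        rw [mulVec_single_col] at hmem
        have heq : (fun i => M22 m i (⟨(k:ℕ)+n, h'⟩ : Fin m))
            = Pi.single (⟨(k:ℕ)+(n+1), h⟩ : Fin m) (1:ℂ) := by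
          funext i
          simp [M22, Pi.single_apply, Fin.ext_iff]
          constructor <;> omega
        rw [heq] at hmem
        exact hmem
    -- going down
    have hdown : ∀ n : ℕ, n ≤ (k:ℕ) → Pi.single (⟨(k:ℕ)-n, by omega⟩ : Fin m) (1:ℂ) ∈ W := by
      intro n
      induction n with
      | zero =>
        intro _
        have : (⟨(k:ℕ)-0, by omega⟩ : Fin m) = k := by ext; simp
        rw [this]; exact hbase
      | succ n ihn =>
        intro hn
        have hprev := ihn (by omega)
        have hmem := h11 _ hprev
        rw [mulVec_single_col] at hmem
        set p : ℕ := (k:ℕ) - n with hp_def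
        have hp0 : 0 < p := by omega
        have hpm : p < m := by omega
        have heq : (fun i => M11 q m i (⟨p, by omega⟩ : Fin m))
            = aco q m p • (Pi.single (⟨(k:ℕ)-(n+1), by omega⟩ : Fin m) (1:ℂ) : Fin m → ℂ) := by
          funext i
          by_cases hieq : i = (⟨(k:ℕ)-(n+1), by omega⟩ : Fin m)
          · have hi2 : (k:ℕ) - (n+1) + 1 = p := by omega
            simp [M11, aco, Pi.single_apply, hieq, hi2]
          · have hi : ¬ ((i:ℕ) + 1 = p) := by
              rw [Fin.ext_iff] at hieq; simp at hieq; omega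
            simp [M11, aco, Pi.single_apply, hieq, hi]
        rw [heq] at hmem
        have := W.smul_mem (aco q m p)⁻¹ hmem
        rw [smul_smul, inv_mul_cancel₀ (haco p hp0 hpm), one_smul] at this
        exact this
    -- all basis vectors
    have hall : ∀ j : Fin m, Pi.single j (1:ℂ) ∈ W := by
      intro j
      rcases le_or_gt (k:ℕ) (j:ℕ) with hle | hlt
      · have h : (k:ℕ) + ((j:ℕ) - (k:ℕ)) < m := by omega
        have := hup ((j:ℕ) - (k:ℕ)) h
        have heq : (⟨(k:ℕ)+((j:ℕ)-(k:ℕ)), h⟩ : Fin m) = j := by ext; simp; omega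
        rwa [heq] at this
      · have := hdown ((k:ℕ) - (j:ℕ)) (by omega)
        have heq : (⟨(k:ℕ)-((k:ℕ)-(j:ℕ)), by omega⟩ : Fin m) = j := by ext; simp; omega
        rwa [heq] at this
    rw [Submodule.eq_top_iff']
    intro x
    have hx : x = ∑ j : Fin m, x j • (Pi.single j (1:ℂ) : Fin m → ℂ) := by
      funext i
      simp [Pi.single_apply]
    rw [hx]
    exact Submodule.sum_mem _ fun j _ => W.smul_mem _ (hall j)

end
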